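/- Let G be a finite simple graph with m ≥ 2 edges and minimum degree at least 1, let A and B be disjoint sets of vertices of G with |A| ≤ |B|, and let ℓ ≥ 32·log₂ m be an integer. Then at least one of the following holds: (i) there exist a matching M between A and B (a set of pairs (a, b) with a ∈ A and b ∈ B, in which all first coordinates are distinct and all second coordinates are distinct) with |M| ≥ (8·log₂ m/ℓ²)·|A|, together with a family (P_{ab})_{(a,b)∈M} of pairwise edge-disjoint paths in G, where each P_{ab} joins a to b and has length at most ℓ; or (ii) there is a partition of V(G) into nonempty sets X and Y with δ_G(X) ≤ (24·log₂ m/ℓ)·min(vol_G(X), vol_G(Y)). -/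

import Mathlib

open Finset
open scoped Classical

noncomputable section

variable {V : Type*} [Fintype V]

/-- The degree of the vertex `v` in the graph `G`. -/
def gdeg (G : SimpleGraph V) (v : V) : ℕ :=
  (Finset.univ.filter fun u => G.Adj v u).card

/-- The volume of a vertex set `S` in `G`: the sum of degrees of its vertices. -/
def gvol (G : SimpleGraph V) (S : Finset V) : ℕ := ∑ v ∈ S, gdeg G v

/-- The number of edges of `G` with exactly one endpoint in `S`. -/
def gcut (G : SimpleGraph V) (S : Finset V) : ℕ :=
  (Finset.univ.filter fun p : V × V => p.1 ∈ S ∧ p.2 ∉ S ∧ G.Adj p.1 p.2).card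

/-- The number of edges of `G`. -/
def edgeCount (G : SimpleGraph V) : ℕ :=
  (Finset.univ.filter fun p : V × V => G.Adj p.1 p.2).card / 2

lemma gdeg_eq_degree (G : SimpleGraph V) (v : V) : gdeg G v = G.degree v := by
  classical
  rw [gdeg, SimpleGraph.degree, SimpleGraph.neighborFinset_eq_filter]

lemma gvol_pairs (G : SimpleGraph V) (D : Finset V) :
    gvol G D = (Finset.univ.filter fun p : V × V => p.1 ∈ D ∧ G.Adj p.1 p.2).card := by
  classical
  rw [gvol, Finset.card_eq_sum_card_fiberwise (f := Prod.fst) (t := D)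
    (fun p hp => (Finset.mem_filter.mp hp).2.1)]
  refine Finset.sum_congr rfl fun v hv => ?_
  rw [gdeg]
  refine (Finset.card_bij (fun p _ => p.2) ?_ ?_ ?_).symm
  · intro p hp
    simp only [Finset.mem_filter, Finset.mem_univ, true_and] at hp ⊢
    rw [← hp.2]; exact hp.1.2
  · intro p hp q hq h
    simp only [Finset.mem_filter] at hp hq
    exact Prod.ext (hp.2.trans hq.2.symm) h
  · intro u hu
    simp only [Finset.mem_filter, Finset.mem_univ, true_and] at hu
    exact ⟨(v, u), by simp [hu, hv], rfl⟩

lemma gvol_univ (G : SimpleGraph V) : gvol G Finset.univ = 2 * edgeCount G := by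
  classical
  have h1 : gvol G Finset.univ = ∑ v, G.degree v := by
    rw [gvol]; exact Finset.sum_congr rfl fun v _ => gdeg_eq_degree G v
  have h2 := G.sum_degrees_eq_twice_card_edges
  have h3 : (Finset.univ.filter fun p : V × V => G.Adj p.1 p.2).card = 2 * G.edgeFinset.card := by
    rw [← h2, ← h1, gvol_pairs]
    congr 1
    ext p
    simp only [Finset.mem_filter, Finset.mem_univ, true_and]
  rw [edgeCount, h3, h1, h2]
  omega

lemma card_le_gvol (G : SimpleGraph V) (hmin : ∀ v : V, 1 ≤ gdeg G v) (S : Finset V) :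
    S.card ≤ gvol G S := by
  rw [gvol]
  calc S.card = ∑ _v ∈ S, 1 := by simp
  _ ≤ ∑ v ∈ S, gdeg G v := Finset.sum_le_sum fun v _ => hmin v

lemma gvol_mono (G : SimpleGraph V) {S T : Finset V} (h : S ⊆ T) : gvol G S ≤ gvol G T :=
  Finset.sum_le_sum_of_subset h

lemma gvol_union_disjoint (G : SimpleGraph V) {S T : Finset V} (h : Disjoint S T) :
    gvol G (S ∪ T) = gvol G S + gvol G T := Finset.sum_union h

lemma gvol_sdiff (G : SimpleGraph V) (S : Finset V) :
    gvol G (Finset.univ \ S) = gvol G Finset.univ - gvol G S := by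
  classical
  have : gvol G (Finset.univ \ S) + gvol G S = gvol G Finset.univ := by
    rw [← gvol_union_disjoint G (Finset.sdiff_disjoint), Finset.sdiff_union_of_subset (Finset.subset_univ S)]
  omega

lemma gvol_sdiff_add (G : SimpleGraph V) {S T : Finset V} (h : S ⊆ T) :
    gvol G T = gvol G S + gvol G (T \ S) := by
  rw [gvol, gvol, gvol, ← Finset.sum_sdiff h]; ring

def ball (H : SimpleGraph V) (S : Finset V) : ℕ → Finset V
  | 0 => S
  | (i+1) => ball H S i ∪ Finset.univ.filter fun v => ∃ u ∈ ball H S i, H.Adj u v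

@[simp] lemma ball_zero (H : SimpleGraph V) (S : Finset V) : ball H S 0 = S := rfl

lemma ball_subset_succ (H : SimpleGraph V) (S : Finset V) (i : ℕ) :
    ball H S i ⊆ ball H S (i+1) := Finset.subset_union_left

lemma ball_mono (H : SimpleGraph V) (S : Finset V) {i j : ℕ} (h : i ≤ j) :
    ball H S i ⊆ ball H S j := by
  induction j with
  | zero => rw [Nat.le_zero.mp h]
  | succ j ih =>
    rcases Nat.lt_or_ge i (j+1) with h' | h'
    · exact (ih (Nat.lt_succ_iff.mp h')).trans (ball_subset_succ H S j)
    · rw [Nat.le_antisymm h h']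

lemma subset_ball (H : SimpleGraph V) (S : Finset V) (i : ℕ) : S ⊆ ball H S i :=
  ball_mono H S (Nat.zero_le i)

lemma mem_ball_succ_of_adj (H : SimpleGraph V) (S : Finset V) (i : ℕ) {u v : V}
    (hu : u ∈ ball H S i) (h : H.Adj u v) : v ∈ ball H S (i+1) := by
  rw [ball]
  exact Finset.mem_union_right _ (Finset.mem_filter.mpr ⟨Finset.mem_univ v, u, hu, h⟩)

lemma exists_walk_of_mem_ball (H : SimpleGraph V) (S : Finset V) (i : ℕ) :
    ∀ v : V, v ∈ ball H S i → ∃ a ∈ S, ∃ w : H.Walk a v, w.length ≤ i := by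
  induction i with
  | zero => exact fun v hv => ⟨v, hv, SimpleGraph.Walk.nil, le_refl 0⟩
  | succ i ih =>
    intro v hv
    rw [ball] at hv
    rcases Finset.mem_union.mp hv with h | h
    · obtain ⟨a, ha, w, hw⟩ := ih v h
      exact ⟨a, ha, w, hw.trans (Nat.le_succ i)⟩
    · obtain ⟨_, u, hu, hadj⟩ := Finset.mem_filter.mp h
      obtain ⟨a, ha, w, hw⟩ := ih u hu
      exact ⟨a, ha, w.concat hadj, by rw [SimpleGraph.Walk.length_concat]; omega⟩

lemma gcut_le_gcut_deleteEdges_add (G : SimpleGraph V) (Ffin : Finset (Sym2 V)) (S : Finset V) :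
    gcut G S ≤ gcut (G.deleteEdges ↑Ffin) S + Ffin.card := by
  classical
  set P1 := Finset.univ.filter fun p : V × V => p.1 ∈ S ∧ p.2 ∉ S ∧ G.Adj p.1 p.2 with hP1
  set P2 := Finset.univ.filter fun p : V × V =>
    p.1 ∈ S ∧ p.2 ∉ S ∧ (G.deleteEdges ↑Ffin).Adj p.1 p.2 with hP2
  set P3 := P1.filter fun p : V × V => s(p.1, p.2) ∈ Ffin with hP3
  have hsub : P1 ⊆ P2 ∪ P3 := by
    intro p hp
    have hp' := Finset.mem_filter.mp hp
    by_cases he : s(p.1, p.2) ∈ Ffin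
    · exact Finset.mem_union_right _ (Finset.mem_filter.mpr ⟨hp, he⟩)
    · refine Finset.mem_union_left _ (Finset.mem_filter.mpr ⟨Finset.mem_univ p, hp'.2.1, hp'.2.2.1, ?_⟩)
      rw [SimpleGraph.deleteEdges_adj]
      exact ⟨hp'.2.2.2, he⟩
  have h3 : P3.card ≤ Ffin.card := by
    refine Finset.card_le_card_of_injOn (fun p => s(p.1, p.2)) ?_ ?_
    · intro p hp; exact (Finset.mem_filter.mp hp).2
    · intro p hp q hq h
      have hp' := Finset.mem_filter.mp ((Finset.mem_filter.mp hp).1)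
      have hq' := Finset.mem_filter.mp ((Finset.mem_filter.mp hq).1)
      rcases Sym2.eq_iff.mp h with ⟨h1, h2⟩ | ⟨h1, h2⟩
      · exact Prod.ext h1 h2
      · exact absurd (h1 ▸ hp'.2.1) hq'.2.2.1
  calc gcut G S = P1.card := rfl
  _ ≤ (P2 ∪ P3).card := Finset.card_le_card hsub
  _ ≤ P2.card + P3.card := Finset.card_union_le P2 P3
  _ ≤ gcut (G.deleteEdges ↑Ffin) S + Ffin.card := Nat.add_le_add (by rw [hP2, gcut]; exact Finset.card_le_card (fun x hx => by simpa using hx)) h3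

lemma gcut_deleteEdges_le (G : SimpleGraph V) (F : Set (Sym2 V)) (S T : Finset V)
    (hT : ∀ u v : V, u ∈ S → (G.deleteEdges F).Adj u v → v ∈ T) :
    gcut (G.deleteEdges F) S ≤ gvol G (T \ S) := by
  classical
  rw [gvol_pairs]
  refine Finset.card_le_card_of_injOn (fun p => (p.2, p.1)) ?_ ?_
  · intro p hp
    have hp' : p ∈ Finset.univ.filter (fun a : V × V => a.1 ∈ S ∧ a.2 ∉ S ∧ (G.deleteEdges F).Adj a.1 a.2) := by
      simpa using hp
    obtain ⟨-, h1, h2, h3⟩ := Finset.mem_filter.mp hp'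
    refine Finset.mem_filter.mpr ⟨Finset.mem_univ _, ?_, ((SimpleGraph.deleteEdges_le F) h3.symm : G.Adj p.2 p.1)⟩
    exact Finset.mem_sdiff.mpr ⟨hT p.1 p.2 h1 h3, h2⟩
  · intro p _ q _ h
    simp only [Prod.mk.injEq] at h
    exact Prod.ext h.2 h.1

def IsGood (G : SimpleGraph V) (A B : Finset V) (ℓ : ℕ) (M : Finset (V × V)) : Prop :=
  (∀ p ∈ M, p.1 ∈ A ∧ p.2 ∈ B) ∧
  (∀ p ∈ M, ∀ q ∈ M, p ≠ q → p.1 ≠ q.1 ∧ p.2 ≠ q.2) ∧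
  ∃ P : ∀ p : {x : V × V // x ∈ M}, G.Walk p.1.1 p.1.2,
    (∀ p, (P p).IsPath ∧ (P p).length ≤ ℓ) ∧
    (∀ p q, p ≠ q → ∀ e ∈ (P p).edges, e ∉ (P q).edges)

lemma isGood_empty (G : SimpleGraph V) (A B : Finset V) (ℓ : ℕ) :
    IsGood G A B ℓ ∅ := by
  refine ⟨by simp, by simp, fun p => (Finset.notMem_empty _ p.2).elim, fun p => (Finset.notMem_empty _ p.2).elim, fun p => (Finset.notMem_empty _ p.2).elim⟩

lemma isGood_insert (G : SimpleGraph V) (A B : Finset V) (ℓ : ℕ) (M : Finset (V × V))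
    (P : ∀ p : {x : V × V // x ∈ M}, G.Walk p.1.1 p.1.2)
    (hABm : ∀ p ∈ M, p.1 ∈ A ∧ p.2 ∈ B)
    (hdist : ∀ p ∈ M, ∀ q ∈ M, p ≠ q → p.1 ≠ q.1 ∧ p.2 ≠ q.2)
    (hP : ∀ p, (P p).IsPath ∧ (P p).length ≤ ℓ)
    (hPdisj : ∀ p q, p ≠ q → ∀ e ∈ (P p).edges, e ∉ (P q).edges)
    (a b : V) (ha : a ∈ A) (hb : b ∈ B)
    (ha1 : a ∉ M.image Prod.fst) (hb1 : b ∉ M.image Prod.snd)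
    (w : G.Walk a b) (hwp : w.IsPath) (hwl : w.length ≤ ℓ)
    (hwe : ∀ e ∈ w.edges, ∀ p, e ∉ (P p).edges) :
    IsGood G A B ℓ (insert (a, b) M) := by
  classical
  have hmemfst : ∀ q ∈ M, a ≠ q.1 := by
    intro q hq h
    exact ha1 (Finset.mem_image.mpr ⟨q, hq, h.symm⟩)
  have hmemsnd : ∀ q ∈ M, b ≠ q.2 := by
    intro q hq h
    exact hb1 (Finset.mem_image.mpr ⟨q, hq, h.symm⟩)
  refine ⟨?_, ?_, ?_⟩
  · intro p hp
    rcases Finset.mem_insert.mp hp with h | h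
    · rw [h]; exact ⟨ha, hb⟩
    · exact hABm p h
  · intro p hp q hq hpq
    rcases Finset.mem_insert.mp hp with h1 | h1 <;> rcases Finset.mem_insert.mp hq with h2 | h2
    · exact absurd (h1.trans h2.symm) hpq
    · rw [h1]; exact ⟨hmemfst q h2, hmemsnd q h2⟩
    · rw [h2]; exact ⟨(hmemfst p h1).symm, (hmemsnd p h1).symm⟩
    · exact hdist p h1 q h2 hpq
  · refine ⟨fun q => if h : (q : V × V) ∈ M then P ⟨q.1, h⟩ else
      w.copy
        (congrArg Prod.fst ((Finset.mem_insert.mp q.2).resolve_right h)).symm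
        (congrArg Prod.snd ((Finset.mem_insert.mp q.2).resolve_right h)).symm, ?_, ?_⟩
    · intro q
      by_cases h : (q : V × V) ∈ M
      · simp only [dif_pos h]; exact hP _
      · simp only [dif_neg h, SimpleGraph.Walk.isPath_copy, SimpleGraph.Walk.length_copy]
        exact ⟨hwp, hwl⟩
    · intro q1 q2 hq e he
      by_cases h1 : (q1 : V × V) ∈ M <;> by_cases h2 : (q2 : V × V) ∈ M
      · simp only [dif_pos h1] at he
        simp only [dif_pos h2]
        refine hPdisj ⟨q1.1, h1⟩ ⟨q2.1, h2⟩ ?_ e he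
        intro hcon
        have hval : (q1 : V × V) = (q2 : V × V) := Subtype.mk_eq_mk.mp hcon
        exact hq (Subtype.ext hval)
      · simp only [dif_pos h1] at he
        simp only [dif_neg h2, SimpleGraph.Walk.edges_copy]
        intro hew
        exact hwe e hew ⟨q1.1, h1⟩ he
      · simp only [dif_neg h1, SimpleGraph.Walk.edges_copy] at he
        simp only [dif_pos h2]
        exact hwe e he ⟨q2.1, h2⟩
      · exact absurd (Subtype.ext (((Finset.mem_insert.mp q1.2).resolve_right h1).trans
          ((Finset.mem_insert.mp q2.2).resolve_right h2).symm)) hq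

lemma log_one_add_ge {x : ℝ} (h0 : 0 ≤ x) (h4 : x ≤ 1/4) : 4/5 * x ≤ Real.log (1 + x) := by
  have h1 : (0:ℝ) < 1 + x := by linarith
  have h2 := Real.one_sub_inv_le_log_of_pos h1
  have h5 : (1 + x) * (1 + x)⁻¹ = 1 := mul_inv_cancel₀ h1.ne'
  have h6 : (0:ℝ) < (1 + x)⁻¹ := inv_pos.mpr h1
  nlinarith

lemma numeric_final {L ℓR mR : ℝ} {r : ℕ}
    (hL1 : 1 ≤ L) (hℓ : 32 * L ≤ ℓR) (hr : ℓR ≤ 2 * (r : ℝ) + 1)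
    (hpow : (1 + 8 * L / ℓR) ^ r ≤ mR)
    (hlogm : Real.log mR = L * Real.log 2) : False := by
  have hℓpos : (0:ℝ) < ℓR := by linarith
  set x := 8 * L / ℓR with hx
  have hx0 : 0 < x := by
    apply div_pos <;> linarith
  have hx4 : x ≤ 1/4 := by
    rw [hx, div_le_iff₀ hℓpos]; linarith
  have hlog := log_one_add_ge hx0.le hx4
  have h1x : (0:ℝ) < 1 + x := by linarith
  have hpowpos : (0:ℝ) < (1 + x) ^ r := pow_pos h1x r
  have hlogpow : (r : ℝ) * Real.log (1 + x) ≤ Real.log mR := by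
    rw [← Real.log_pow]
    exact Real.log_le_log hpowpos hpow
  have hrnn : (0:ℝ) ≤ (r : ℝ) := Nat.cast_nonneg r
  have hstep1 : (r : ℝ) * (4/5 * x) ≤ (r : ℝ) * Real.log (1 + x) :=
    mul_le_mul_of_nonneg_left hlog hrnn
  have hlog2 : Real.log 2 < 0.6931471808 := Real.log_two_lt_d9
  have hL0 : (0:ℝ) ≤ L := by linarith
  have hstep2 : Real.log mR ≤ L * 0.6931471808 := by
    rw [hlogm]
    exact mul_le_mul_of_nonneg_left hlog2.le hL0
  have hrge : (ℓR - 1)/2 ≤ (r : ℝ) := by linarith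
  have hrx : ((ℓR - 1)/2) * x ≤ (r:ℝ) * x := mul_le_mul_of_nonneg_right hrge hx0.le
  have heval : ((ℓR - 1)/2) * x = 4*L - 4*L/ℓR := by
    rw [hx]; field_simp; ring
  have hsmall : 4*L/ℓR ≤ 1/8 := by
    rw [div_le_iff₀ hℓpos]; linarith
  nlinarith [hstep1, hstep2, hlogpow, hrx, heval, hsmall, hL1]

/-- Either a large matching between `A` and `B`, embedded by pairwise
edge-disjoint paths of length at most `ℓ`, or a sparse cut. -/
theorem statement11 (G : SimpleGraph V) (hm : 2 ≤ edgeCount G)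
    (hmin : ∀ v : V, 1 ≤ gdeg G v)
    (A B : Finset V) (hAB : Disjoint A B) (hcard : A.card ≤ B.card)
    (ℓ : ℕ) (hℓ : 32 * Real.logb 2 (edgeCount G) ≤ (ℓ : ℝ)) :
    (∃ M : Finset (V × V),
      (∀ p ∈ M, p.1 ∈ A ∧ p.2 ∈ B) ∧
      (∀ p ∈ M, ∀ q ∈ M, p ≠ q → p.1 ≠ q.1 ∧ p.2 ≠ q.2) ∧
      8 * Real.logb 2 (edgeCount G) / (ℓ : ℝ) ^ 2 * (A.card : ℝ) ≤ (M.card : ℝ) ∧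
      ∃ P : ∀ p : {x : V × V // x ∈ M}, G.Walk p.1.1 p.1.2,
        (∀ p, (P p).IsPath ∧ (P p).length ≤ ℓ) ∧
        (∀ p q, p ≠ q → ∀ e ∈ (P p).edges, e ∉ (P q).edges)) ∨
    (∃ X : Finset V, X.Nonempty ∧ (Finset.univ \ X).Nonempty ∧
      (gcut G X : ℝ) ≤ 24 * Real.logb 2 (edgeCount G) / (ℓ : ℝ) *
        min (gvol G X : ℝ) (gvol G (Finset.univ \ X) : ℝ)) := by
  classical
  have h𝒮ne : ((Finset.univ : Finset (Finset (V × V))).filter (IsGood G A B ℓ)).Nonempty :=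
    ⟨∅, Finset.mem_filter.mpr ⟨Finset.mem_univ _, isGood_empty G A B ℓ⟩⟩
  obtain ⟨M, hM𝒮, hMmax⟩ := Finset.exists_max_image _ Finset.card h𝒮ne
  obtain ⟨hMab, hMdist, P, hP, hPdisj⟩ := (Finset.mem_filter.mp hM𝒮).2
  by_cases hbig : 8 * Real.logb 2 (edgeCount G) / (ℓ : ℝ) ^ 2 * (A.card : ℝ) ≤ (M.card : ℝ)
  · exact Or.inl ⟨M, hMab, hMdist, hbig, P, hP, hPdisj⟩
  push_neg at hbig
  set L := Real.logb 2 (edgeCount G) with hLdef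
  have hm2R : (2:ℝ) ≤ (edgeCount G : ℝ) := by exact_mod_cast hm
  have hL1 : (1:ℝ) ≤ L := by
    rw [hLdef, Real.logb, le_div_iff₀ (Real.log_pos one_lt_two), one_mul]
    exact Real.log_le_log (by norm_num) hm2R
  have hℓR : 32 * L ≤ (ℓ:ℝ) := hℓ
  have hℓ32 : (32:ℝ) ≤ (ℓ:ℝ) := by linarith
  have hℓpos : (0:ℝ) < (ℓ:ℝ) := by linarith
  have hMlt : (M.card : ℝ) < 8 * L / (ℓ:ℝ)^2 * A.card := hbig
  have hcoef : 8 * L / (ℓ:ℝ)^2 ≤ 1/128 := by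
    rw [div_le_iff₀ (by positivity)]
    have h1 : 32 * L * 32 ≤ (ℓ:ℝ) * (ℓ:ℝ) :=
      mul_le_mul hℓR hℓ32 (by norm_num) (by linarith)
    nlinarith
  have hMA : (M.card:ℝ) < (A.card:ℝ)/128 := by
    have h1 : 8 * L / (ℓ:ℝ)^2 * A.card ≤ 1/128 * A.card :=
      mul_le_mul_of_nonneg_right hcoef (Nat.cast_nonneg _)
    linarith
  set A₁ := A \ M.image Prod.fst with hA1def
  set B₁ := B \ M.image Prod.snd with hB1def
  have hA1card : (A.card:ℝ) - M.card ≤ A₁.card := by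
    have h1 : A ⊆ A₁ ∪ M.image Prod.fst := by
      intro v hv
      by_cases h : v ∈ M.image Prod.fst
      · exact Finset.mem_union_right _ h
      · exact Finset.mem_union_left _ (Finset.mem_sdiff.mpr ⟨hv, h⟩)
    have h2 := (Finset.card_le_card h1).trans (Finset.card_union_le _ _)
    have h3 := Finset.card_image_le (s := M) (f := Prod.fst)
    have h4 : A.card ≤ A₁.card + M.card := by omega
    have h5 : (A.card:ℝ) ≤ (A₁.card:ℝ) + M.card := by exact_mod_cast h4
    linarith
  have hB1card : (A.card:ℝ) - M.card ≤ B₁.card := by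
    have h1 : B ⊆ B₁ ∪ M.image Prod.snd := by
      intro v hv
      by_cases h : v ∈ M.image Prod.snd
      · exact Finset.mem_union_right _ h
      · exact Finset.mem_union_left _ (Finset.mem_sdiff.mpr ⟨hv, h⟩)
    have h2 := (Finset.card_le_card h1).trans (Finset.card_union_le _ _)
    have h3 := Finset.card_image_le (s := M) (f := Prod.snd)
    have h4 : B.card ≤ B₁.card + M.card := by omega
    have h5 : (B.card:ℝ) ≤ (B₁.card:ℝ) + M.card := by exact_mod_cast h4
    have h6 : (A.card:ℝ) ≤ (B.card:ℝ) := by exact_mod_cast hcard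
    linarith
  have hA1half : (A.card:ℝ)/2 ≤ A₁.card := by linarith
  have hB1half : (A.card:ℝ)/2 ≤ B₁.card := by linarith
  have hApos : (0:ℝ) < A.card := by
    by_contra h
    push_neg at h
    have h0 : (A.card:ℝ) = 0 := le_antisymm h (Nat.cast_nonneg _)
    rw [h0, mul_zero] at hMlt
    exact absurd hMlt (not_lt.mpr (Nat.cast_nonneg _))
  have hA1ne : A₁.Nonempty := by
    rw [← Finset.card_pos]
    have : (0:ℝ) < A₁.card := by linarith
    exact_mod_cast this
  have hB1ne : B₁.Nonempty := by
    rw [← Finset.card_pos]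
    have : (0:ℝ) < B₁.card := by linarith
    exact_mod_cast this
  set Ffin := M.attach.biUnion (fun p => (P p).edges.toFinset) with hFdef
  have hFcard : (Ffin.card : ℝ) ≤ (ℓ:ℝ) * M.card := by
    have h1 : Ffin.card ≤ ∑ p ∈ M.attach, (P p).edges.toFinset.card :=
      Finset.card_biUnion_le
    have h2 : ∑ p ∈ M.attach, (P p).edges.toFinset.card ≤ M.attach.card * ℓ := by
      apply Finset.sum_le_card_nsmul
      intro p _
      exact ((P p).edges.toFinset_card_le).trans
        (by rw [SimpleGraph.Walk.length_edges]; exact (hP p).2)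
    rw [Finset.card_attach] at h2
    have h3 : Ffin.card ≤ M.card * ℓ := h1.trans h2
    have h4 : (Ffin.card:ℝ) ≤ (M.card:ℝ) * ℓ := by exact_mod_cast h3
    linarith
  have hFA : (Ffin.card : ℝ) ≤ 8 * L / (ℓ:ℝ) * A.card := by
    have h4 : (ℓ:ℝ) * M.card ≤ (ℓ:ℝ) * (8*L/(ℓ:ℝ)^2*A.card) :=
      mul_le_mul_of_nonneg_left hMlt.le hℓpos.le
    have h5 : (ℓ:ℝ) * (8*L/(ℓ:ℝ)^2*A.card) = 8*L/(ℓ:ℝ)*A.card := by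
      field_simp
    linarith
  set G' := G.deleteEdges ↑Ffin with hG'def
  set r := ℓ / 2 with hrdef
  by_cases hmeet : ((ball G' A₁ r) ∩ (ball G' B₁ r)).Nonempty
  · exfalso
    obtain ⟨z, hz⟩ := hmeet
    obtain ⟨a, haA1, w1, hw1⟩ := exists_walk_of_mem_ball G' A₁ r z (Finset.mem_inter.mp hz).1
    obtain ⟨b, hbB1, w2, hw2⟩ := exists_walk_of_mem_ball G' B₁ r z (Finset.mem_inter.mp hz).2
    set wb := (w1.append w2.reverse).bypass with hwbdef
    have hwbp : wb.IsPath := SimpleGraph.Walk.bypass_isPath _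
    have hwbl : wb.length ≤ ℓ := by
      have h1 := SimpleGraph.Walk.length_bypass_le (w1.append w2.reverse)
      rw [SimpleGraph.Walk.length_append, SimpleGraph.Walk.length_reverse] at h1
      rw [hwbdef]
      omega
    have hwbE : ∀ e ∈ wb.edges, e ∈ G.edgeSet ∧ e ∉ (↑Ffin : Set (Sym2 V)) := by
      intro e he
      have h1 : e ∈ G'.edgeSet := wb.edges_subset_edgeSet he
      rw [hG'def, SimpleGraph.edgeSet_deleteEdges] at h1
      exact h1
    set wG := wb.transfer G (fun e he => (hwbE e he).1) with hwGdef
    have hwGp : wG.IsPath := hwbp.transfer _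
    have hwGl : wG.length ≤ ℓ := by
      rw [hwGdef, SimpleGraph.Walk.length_transfer]; exact hwbl
    have hwGe : ∀ e ∈ wG.edges, ∀ p, e ∉ (P p).edges := by
      intro e he p hep
      have h1 : e ∈ wb.edges := by
        rwa [hwGdef, SimpleGraph.Walk.edges_transfer] at he
      have h2 : e ∈ Ffin := by
        rw [hFdef]
        exact Finset.mem_biUnion.mpr ⟨p, Finset.mem_attach _ _, List.mem_toFinset.mpr hep⟩
      exact (hwbE e h1).2 (by exact_mod_cast h2)
    obtain ⟨haA, haim⟩ := Finset.mem_sdiff.mp haA1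
    obtain ⟨hbB, hbim⟩ := Finset.mem_sdiff.mp hbB1
    have hgood := isGood_insert G A B ℓ M P hMab hMdist hP hPdisj a b haA hbB haim hbim
      wG hwGp hwGl hwGe
    have hnotmem : (a, b) ∉ M := fun h => haim (Finset.mem_image.mpr ⟨(a,b), h, rfl⟩)
    have hmem : insert (a,b) M ∈ (Finset.univ : Finset (Finset (V × V))).filter (IsGood G A B ℓ) :=
      Finset.mem_filter.mpr ⟨Finset.mem_univ _, hgood⟩
    have hle := hMmax _ hmem
    rw [Finset.card_insert_of_notMem hnotmem] at hle
    omega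
  · right
    have hdisjball : Disjoint (ball G' A₁ r) (ball G' B₁ r) := by
      rw [Finset.disjoint_iff_inter_eq_empty]
      exact Finset.not_nonempty_iff_eq_empty.mp hmeet
    have hvolsum : gvol G (ball G' A₁ r) + gvol G (ball G' B₁ r) ≤ gvol G Finset.univ := by
      rw [← gvol_union_disjoint G hdisjball]
      exact gvol_mono G (Finset.subset_univ _)
    obtain ⟨S0, hS0half, hS0ne, hS0small⟩ :
        ∃ S0 : Finset V, ((A.card:ℝ)/2 ≤ S0.card) ∧ S0.Nonempty ∧
          2 * gvol G (ball G' S0 r) ≤ gvol G Finset.univ := by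
      by_cases h : 2 * gvol G (ball G' A₁ r) ≤ gvol G Finset.univ
      · exact ⟨A₁, hA1half, hA1ne, h⟩
      · exact ⟨B₁, hB1half, hB1ne, by omega⟩
    by_cases hkey : ∃ i, i < r ∧
        (gcut G (ball G' S0 i) : ℝ) ≤ 24 * L / (ℓ:ℝ) * gvol G (ball G' S0 i)
    · obtain ⟨i, hir, hsparse⟩ := hkey
      have hvolX : 2 * gvol G (ball G' S0 i) ≤ gvol G Finset.univ := by
        have h1 := gvol_mono G (ball_mono G' S0 hir.le)
        omega
      have hsplit := gvol_sdiff_add G (Finset.subset_univ (ball G' S0 i))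
      have hXvol2 : gvol G (ball G' S0 i) ≤ gvol G (Finset.univ \ ball G' S0 i) := by omega
      have huniv4 : 4 ≤ gvol G Finset.univ := by rw [gvol_univ]; omega
      refine ⟨ball G' S0 i, hS0ne.mono (subset_ball G' S0 i), ?_, ?_⟩
      · by_contra h
        rw [Finset.not_nonempty_iff_eq_empty, Finset.sdiff_eq_empty_iff_subset] at h
        have h2 : gvol G Finset.univ ≤ gvol G (ball G' S0 i) := gvol_mono G h
        omega
      · have hminX : min (gvol G (ball G' S0 i) : ℝ) (gvol G (Finset.univ \ ball G' S0 i) : ℝ)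
            = (gvol G (ball G' S0 i) : ℝ) := min_eq_left (by exact_mod_cast hXvol2)
        rw [hminX]
        exact hsparse
    · exfalso
      push_neg at hkey
      set x := 8 * L / (ℓ:ℝ) with hxdef
      have hxpos : 0 < x := by
        rw [hxdef]
        apply div_pos (by linarith) hℓpos
      have grow : ∀ i, i ≤ r → (1+x)^i * (S0.card:ℝ) ≤ (gvol G (ball G' S0 i) : ℝ) := by
        intro i
        induction i with
        | zero =>
          intro _
          simp only [pow_zero, one_mul, ball_zero]
          exact_mod_cast card_le_gvol G hmin S0
        | succ i ih =>
          intro hir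
          have hii : i < r := lt_of_lt_of_le (Nat.lt_succ_self i) hir
          have hvi := ih hii.le
          have hstep : gvol G (ball G' S0 i) + gcut G' (ball G' S0 i)
              ≤ gvol G (ball G' S0 (i+1)) := by
            have h1 : gcut G' (ball G' S0 i) ≤ gvol G (ball G' S0 (i+1) \ ball G' S0 i) := by
              rw [hG'def]
              exact gcut_deleteEdges_le G ↑Ffin _ _
                (fun u v hu hadj => mem_ball_succ_of_adj _ S0 i hu hadj)
            have h2 := gvol_sdiff_add G (ball_subset_succ G' S0 i)
            omega
          have h2 : gcut G (ball G' S0 i) ≤ gcut G' (ball G' S0 i) + Ffin.card := by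
            rw [hG'def]
            exact gcut_le_gcut_deleteEdges_add G Ffin _
          have h3 := hkey i hii
          have hcardS0 : (S0.card : ℝ) ≤ (gvol G (ball G' S0 i) : ℝ) := by
            have h4 := (Finset.card_le_card (subset_ball G' S0 i)).trans
              (card_le_gvol G hmin (ball G' S0 i))
            exact_mod_cast h4
          have hLℓnn : (0:ℝ) ≤ 8*L/(ℓ:ℝ) := by positivity
          have hF16 : (Ffin.card:ℝ) ≤ 16 * L / (ℓ:ℝ) * gvol G (ball G' S0 i) := by
            have hAS : (A.card:ℝ) ≤ 2 * gvol G (ball G' S0 i) := by linarith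
            have h5 : 8*L/(ℓ:ℝ) * A.card ≤ 8*L/(ℓ:ℝ) * (2 * gvol G (ball G' S0 i)) :=
              mul_le_mul_of_nonneg_left hAS hLℓnn
            have h6 : 8*L/(ℓ:ℝ) * (2 * gvol G (ball G' S0 i))
                = 16 * L / (ℓ:ℝ) * gvol G (ball G' S0 i) := by ring
            linarith
          have hstepR : (gvol G (ball G' S0 i) : ℝ) + (gcut G' (ball G' S0 i):ℝ)
              ≤ gvol G (ball G' S0 (i+1)) := by exact_mod_cast hstep
          have h2R : (gcut G (ball G' S0 i):ℝ) ≤ (gcut G' (ball G' S0 i):ℝ) + Ffin.card := by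
            exact_mod_cast h2
          have hfinal : (1+x) * (gvol G (ball G' S0 i):ℝ) ≤ gvol G (ball G' S0 (i+1)) := by
            have hexp : (1+x) * (gvol G (ball G' S0 i):ℝ)
                = (gvol G (ball G' S0 i):ℝ) + 8*L/(ℓ:ℝ) * gvol G (ball G' S0 i) := by
              rw [hxdef]; ring
            have h24 : 24 * L / (ℓ:ℝ) * gvol G (ball G' S0 i)
                - 16 * L / (ℓ:ℝ) * gvol G (ball G' S0 i)
                = 8*L/(ℓ:ℝ) * gvol G (ball G' S0 i) := by ring
            linarith
          calc (1+x)^(i+1) * (S0.card:ℝ) = (1+x) * ((1+x)^i * S0.card) := by ring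
          _ ≤ (1+x) * gvol G (ball G' S0 i) :=
            mul_le_mul_of_nonneg_left hvi (by linarith)
          _ ≤ _ := hfinal
      have hfinR := grow r le_rfl
      have hS0one : (1:ℝ) ≤ S0.card := by
        exact_mod_cast Nat.one_le_iff_ne_zero.mpr (Finset.card_ne_zero_of_mem hS0ne.choose_spec)
      have hballm : (gvol G (ball G' S0 r) : ℝ) ≤ (edgeCount G : ℝ) := by
        have h1 : gvol G (ball G' S0 r) ≤ edgeCount G := by
          have h2 := hS0small
          rw [gvol_univ] at h2
          omega
        exact_mod_cast h1
      have hpow : (1+x)^r ≤ (edgeCount G : ℝ) := by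
        have hpnn : (0:ℝ) ≤ (1+x)^r := pow_nonneg (by linarith) r
        calc (1+x)^r = (1+x)^r * 1 := (mul_one _).symm
        _ ≤ (1+x)^r * (S0.card:ℝ) := mul_le_mul_of_nonneg_left hS0one hpnn
        _ ≤ (gvol G (ball G' S0 r) : ℝ) := hfinR
        _ ≤ (edgeCount G : ℝ) := hballm
      have hr2 : (ℓ:ℝ) ≤ 2*(r:ℝ)+1 := by
        have h1 : ℓ ≤ 2*r+1 := by omega
        exact_mod_cast h1
      have hlogm : Real.log (edgeCount G) = L * Real.log 2 := by
        rw [hLdef, Real.logb, div_mul_cancel₀]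
        exact (Real.log_pos one_lt_two).ne'
      rw [hxdef] at hpow
      exact numeric_final hL1 hℓR hr2 hpow hlogm
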